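/- Let E be an infinite semilattice (a commutative semigroup in which every element is idempotent) such that the up-set ↑e = {f ∈ E : e ≤ f} is finite for every e ∈ E, where ≤ is the natural partial order (e ≤ f iff e * f = e). Then the only locally compact Hausdorff topology on E relative to which the semilattice operation is continuous (i.e., E is a topological semilattice) is the discrete topology. -/

import Mathlib

open Filter Topology Set

/-- an infinite semilattice in which every up-set `↑e = {f | e * f = e}` is
finite admits no locally compact Hausdorff topology with (jointly) continuous operation
other than the discrete one. -/
theorem semilattice_finite_upsets_locally_compact_discrete
    {E : Type*} [CommSemigroup E] [Infinite E]
    (hidem : ∀ e : E, e * e = e)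
    (hup : ∀ e : E, {f : E | e * f = e}.Finite)
    [TopologicalSpace E] [T2Space E] [LocallyCompactSpace E]
    [ContinuousMul E] :
    DiscreteTopology E := by
  classical
  have upClosed : ∀ f : E, IsClosed {g : E | f * g = f} := fun f =>
    isClosed_eq (continuous_mul_left f) continuous_const
  -- Key lemma: no net of elements strictly below `e` converges to `e`.
  have lemA : ∀ e : E, ∃ U : Set E, IsOpen U ∧ e ∈ U ∧ ∀ x ∈ U, x * e = x → x = e := by
    intro e
    by_contra hcon
    push_neg at hcon
    have pick : ∀ U ∈ 𝓝 e, ∀ F : Set E, F.Finite → e ∉ F →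
        ∃ y, y ∈ U ∧ y * e = y ∧ y ≠ e ∧ y ∉ F := by
      intro U hU F hF heF
      obtain ⟨x, hx, hxe, hxne⟩ := hcon (interior U ∩ Fᶜ)
        (isOpen_interior.inter hF.isClosed.isOpen_compl)
        ⟨mem_interior_iff_mem_nhds.mpr hU, heF⟩
      exact ⟨x, interior_subset hx.1, hxe, hxne, hx.2⟩
    obtain ⟨K, hKc, hKn⟩ := exists_compact_mem_nhds e
    set U₀ := interior K with hU₀def
    have heU₀ : e ∈ U₀ := mem_interior_iff_mem_nhds.mpr hKn
    have hU₀open : IsOpen U₀ := isOpen_interior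
    -- one construction step: strictly decrease while staying in `U₀` and below `e`
    have step : ∀ x : {x : E // x ∈ U₀ ∧ x * e = x},
        ∃ y : {x : E // x ∈ U₀ ∧ x * e = x}, y.1 * x.1 = y.1 ∧ y.1 ≠ x.1 := by
      rintro ⟨x, hxU, hxe⟩
      have hnb : (fun w : E => x * w) ⁻¹' U₀ ∈ 𝓝 e := by
        have := (continuous_mul_left x).continuousAt (x := e)
        apply this.preimage_mem_nhds
        rw [show x * e = x from hxe]
        exact hU₀open.mem_nhds hxU
      obtain ⟨y, hyU, hye, hyne, hyF⟩ := pick _ hnb ({f : E | x * f = x} \ {e})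
        ((hup x).diff) (fun h => h.2 rfl)
      refine ⟨⟨x * y, hyU, by rw [mul_assoc, hye]⟩, ?_, ?_⟩
      · calc x * y * x = x * x * y := by rw [mul_assoc, mul_comm y x, ← mul_assoc]
          _ = x * y := by rw [hidem]
      · intro h
        exact hyF ⟨h, hyne⟩
    obtain ⟨y₀, hy₀U, hy₀e, -, -⟩ :=
      pick U₀ (hU₀open.mem_nhds heU₀) ∅ finite_empty (notMem_empty e)
    choose g hg1 hg2 using step
    let z : ℕ → {x : E // x ∈ U₀ ∧ x * e = x} :=
      fun n => Nat.rec ⟨y₀, hy₀U, hy₀e⟩ (fun _ ih => g ih) n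
    have hzs : ∀ n, z (n + 1) = g (z n) := fun n => rfl
    have hle : ∀ n k, (z (n + k)).1 * (z n).1 = (z (n + k)).1 := by
      intro n k
      induction k with
      | zero => exact hidem _
      | succ k ih =>
        have h1 : (z (n + k + 1)).1 * (z (n + k)).1 = (z (n + k + 1)).1 := hg1 (z (n + k))
        calc (z (n + k + 1)).1 * (z n).1
            = (z (n + k + 1)).1 * (z (n + k)).1 * (z n).1 := by rw [h1]
          _ = (z (n + k + 1)).1 * ((z (n + k)).1 * (z n).1) := mul_assoc _ _ _
          _ = (z (n + k + 1)).1 * (z (n + k)).1 := by rw [ih]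
          _ = (z (n + k + 1)).1 := h1
    have hne : ∀ n k, (z (n + k + 1)).1 ≠ (z n).1 := by
      intro n k h
      have h2 : (z (n + 1)).1 * (z n).1 = (z (n + 1)).1 := hg1 (z n)
      have h3 : (z n).1 * (z (n + 1)).1 = (z n).1 := by
        have h4 := hle (n + 1) k
        rw [show n + 1 + k = n + k + 1 by ring, h] at h4
        exact h4
      have h5 : (z (n + 1)).1 = (z n).1 := by
        rw [← h2, mul_comm]; exact h3
      exact hg2 (z n) h5
    have hinj : Function.Injective fun n => (z n).1 := by
      intro m n h
      by_contra hmn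
      rcases Nat.lt_or_ge m n with hlt | hge
      · obtain ⟨k, rfl⟩ : ∃ k, n = m + k + 1 := ⟨n - m - 1, by omega⟩
        exact hne m k h.symm
      · have hlt : n < m := by omega
        obtain ⟨k, rfl⟩ : ∃ k, m = n + k + 1 := ⟨m - n - 1, by omega⟩
        exact hne n k h
    set z' : ℕ → E := fun n => (z n).1 with hz'def
    have hmem : ∀ n, z' n ∈ K := fun n => interior_subset (z n).2.1
    have hleP : Filter.map z' atTop ≤ 𝓟 K :=
      le_principal_iff.mpr (mem_map.mpr (Eventually.of_forall hmem))
    obtain ⟨w, hwK, hw⟩ := hKc.exists_clusterPt hleP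
    have hwle : ∀ m, w * z' m = w := by
      intro m
      have hsub : Filter.map z' atTop ≤ 𝓟 (z' '' Set.Ici m) :=
        le_principal_iff.mpr (mem_map.mpr (eventually_atTop.mpr
          ⟨m, fun n hn => Set.mem_image_of_mem _ hn⟩))
      have hwcl : w ∈ closure (z' '' Set.Ici m) :=
        mem_closure_iff_clusterPt.mpr (hw.mono hsub)
      have hclosed : IsClosed {x : E | x * z' m = x} :=
        isClosed_eq (continuous_mul_right _) continuous_id
      have hsubset : z' '' Set.Ici m ⊆ {x : E | x * z' m = x} := by
        rintro _ ⟨n, hn, rfl⟩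
        obtain ⟨k, rfl⟩ := Nat.le.dest (Set.mem_Ici.mp hn)
        exact hle m k
      exact (hclosed.closure_subset_iff.mpr hsubset) hwcl
    have hinf : {f : E | w * f = w}.Infinite :=
      Set.infinite_of_injective_forall_mem hinj (fun n => hwle n)
    exact hinf (hup w)
  -- up-sets are open
  have upOpen : ∀ e : E, IsOpen {x : E | e * x = e} := by
    intro e
    obtain ⟨U, hUo, heU, hU⟩ := lemA e
    have hEq : {x : E | e * x = e} = (fun x => e * x) ⁻¹' U := by
      ext x
      constructor
      · intro hx
        simp only [Set.mem_preimage]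
        rw [show e * x = e from hx]
        exact heU
      · intro hx
        have h1 : (e * x) * e = e * x := by
          calc e * x * e = e * e * x := by rw [mul_assoc, mul_comm x e, ← mul_assoc]
            _ = e * x := by rw [hidem]
        exact hU (e * x) hx h1
    rw [hEq]
    exact hUo.preimage (continuous_mul_left e)
  rw [discreteTopology_iff_isOpen_singleton]
  intro a
  have key : ({a} : Set E) = {x : E | a * x = a} ∩
      ⋂ f ∈ (hup a).toFinset.erase a, {g : E | f * g = f}ᶜ := by
    ext x
    simp only [Set.mem_singleton_iff, Set.mem_inter_iff, Set.mem_iInter, Set.mem_compl_iff,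
      Finset.mem_erase, Set.Finite.mem_toFinset, Set.mem_setOf_eq]
    constructor
    · rintro rfl
      refine ⟨hidem x, fun f hf hfx => ?_⟩
      exact hf.1 (by rw [← hfx, mul_comm, hf.2])
    · rintro ⟨hax, h⟩
      by_contra hxa
      exact h x ⟨hxa, hax⟩ (hidem x)
  rw [key]
  exact (upOpen a).inter (isOpen_biInter_finset fun f _ => (upClosed f).isOpen_compl)
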